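/- Let G = (V,E) be a finite simple graph on V = {1,…,n} with n ≥ 1, and for 0 ≤ k ≤ n let z^E_k(G) = z^E_{J_k}(G) where J_k = { I ⊆ V : |I| = k }. Then ϑ(G) = z^E_0(G) = z^E_1(G), z^E_{k-1}(G) ≥ z^E_k(G) for all 1 ≤ k ≤ n, and z^E_n(G) = α(G), where ϑ(G) denotes the optimal value of the semidefinite program sup{ 1ᵀx : (x,X) ∈ TH²(G) }. -/

import Mathlib

open Matrix

noncomputable section

/-- A stable set vector of a graph `G`: a 0/1 vector with `s i * s j = 0` on edges. -/
def IsStableVec {V : Type*} (G : SimpleGraph V) (s : V → ℝ) : Prop :=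
  (∀ i, s i = 0 ∨ s i = 1) ∧ ∀ i j, G.Adj i j → s i * s j = 0

/-- The squared stable set polytope `STAB²(G) = conv{ s sᵀ : s ∈ S(G) }`. -/
def stab2 {V : Type*} (G : SimpleGraph V) : Set (Matrix V V ℝ) :=
  convexHull ℝ { M | ∃ s, IsStableVec G s ∧ M = Matrix.vecMulVec s s }

/-- The scaled squared stable set polytope
`SSTAB²(G) = conv({ (1/(sᵀs)) s sᵀ : s ∈ S(G), s ≠ 0 } ∪ {0})`. -/
def sstab2 {V : Type*} [Fintype V] (G : SimpleGraph V) : Set (Matrix V V ℝ) :=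
  convexHull ℝ
    ({ M | ∃ s, IsStableVec G s ∧ s ≠ 0 ∧
        M = (∑ k, s k * s k)⁻¹ • Matrix.vecMulVec s s } ∪ {(0 : Matrix V V ℝ)})

/-- The feasible region `TH²(G)` of the SDP (Tn+1): pairs `(x, X)` with `X` symmetric,
`diag X = x`, `X i j = 0` on edges and `X - x xᵀ` positive semidefinite. -/
def th2 {n : ℕ} (G : SimpleGraph (Fin n)) :
    Set ((Fin n → ℝ) × Matrix (Fin n) (Fin n) ℝ) :=
  { p | p.2.IsSymm ∧ (∀ i, p.2 i i = p.1 i) ∧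
      (∀ i j, G.Adj i j → p.2 i j = 0) ∧ (p.2 - Matrix.vecMulVec p.1 p.1).PosSemidef }

/-- The feasible region `CTH²(G)` of the SDP (Tn): symmetric PSD matrices with trace 1
vanishing on edges. -/
def cth2 {n : ℕ} (G : SimpleGraph (Fin n)) : Set (Matrix (Fin n) (Fin n) ℝ) :=
  { X | X.IsSymm ∧ X.trace = 1 ∧ (∀ i j, G.Adj i j → X i j = 0) ∧ X.PosSemidef }

/-- The principal submatrix `X_I` of `X` indexed by `I`. -/
def subMat {n : ℕ} (X : Matrix (Fin n) (Fin n) ℝ) (I : Finset (Fin n)) :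
    Matrix (I : Set (Fin n)) (I : Set (Fin n)) ℝ :=
  X.submatrix Subtype.val Subtype.val

/-- The exact subgraph constraint (ESC) for the subgraph of `G` induced by `I`. -/
def escFeas {n : ℕ} (G : SimpleGraph (Fin n)) (X : Matrix (Fin n) (Fin n) ℝ)
    (I : Finset (Fin n)) : Prop :=
  subMat X I ∈ stab2 (G.induce (I : Set (Fin n)))

/-- The scaled exact subgraph constraint (SESC) for the subgraph of `G` induced by `I`. -/
def sescFeas {n : ℕ} (G : SimpleGraph (Fin n)) (X : Matrix (Fin n) (Fin n) ℝ)
    (I : Finset (Fin n)) : Prop :=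
  subMat X I ∈ sstab2 (G.induce (I : Set (Fin n)))

/-- `z^E_J(G)`: optimal value of (Tn+1) with the ESCs for all `I ∈ J`. -/
def zE {n : ℕ} (G : SimpleGraph (Fin n)) (J : Set (Finset (Fin n))) : ℝ :=
  sSup { r | ∃ x X, (x, X) ∈ th2 G ∧ (∀ I ∈ J, escFeas G X I) ∧ r = ∑ i, x i }

/-- `z^C_J(G)`: optimal value of (Tn) with the ESCs for all `I ∈ J`. -/
def zC {n : ℕ} (G : SimpleGraph (Fin n)) (J : Set (Finset (Fin n))) : ℝ :=
  sSup { r | ∃ X, X ∈ cth2 G ∧ (∀ I ∈ J, escFeas G X I) ∧ r = ∑ i, ∑ j, X i j }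

/-- `z^S_J(G)`: optimal value of (Tn) with the SESCs for all `I ∈ J`. -/
def zS {n : ℕ} (G : SimpleGraph (Fin n)) (J : Set (Finset (Fin n))) : ℝ :=
  sSup { r | ∃ X, X ∈ cth2 G ∧ (∀ I ∈ J, sescFeas G X I) ∧ r = ∑ i, ∑ j, X i j }

/-- The collection `J_k` of all vertex subsets of cardinality `k`. -/
def Jk (n k : ℕ) : Set (Finset (Fin n)) := { I | I.card = k }

namespace Stmt2Aux

variable {n : ℕ}

lemma psd_diag {m : Type*} [Fintype m] [DecidableEq m] {M : Matrix m m ℝ}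
    (h : M.PosSemidef) (i : m) : 0 ≤ M i i := by
  exact h.diag_nonneg

lemma th2_bounds {G : SimpleGraph (Fin n)} {x : Fin n → ℝ} {X : Matrix (Fin n) (Fin n) ℝ}
    (h : (x, X) ∈ th2 G) (i : Fin n) : 0 ≤ x i ∧ x i ≤ 1 := by
  have h0 := psd_diag h.2.2.2 i
  have hd : X i i = x i := h.2.1 i
  simp only [Matrix.sub_apply, Matrix.vecMulVec_apply, hd] at h0
  constructor <;> nlinarith [sq_nonneg (x i), sq_nonneg (1 - x i)]

lemma sum_le_card {G : SimpleGraph (Fin n)} {x : Fin n → ℝ} {X : Matrix (Fin n) (Fin n) ℝ}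
    (h : (x, X) ∈ th2 G) : ∑ i, x i ≤ (n : ℝ) := by
  calc ∑ i, x i ≤ ∑ _i : Fin n, (1 : ℝ) :=
        Finset.sum_le_sum fun i _ => (th2_bounds h i).2
    _ = n := by simp

lemma bddAbove_set (G : SimpleGraph (Fin n)) (J : Set (Finset (Fin n))) :
    BddAbove { r | ∃ x X, (x, X) ∈ th2 G ∧ (∀ I ∈ J, escFeas G X I) ∧ r = ∑ i, x i } := by
  refine ⟨n, ?_⟩
  rintro r ⟨x, X, h, -, rfl⟩
  exact sum_le_card h

/-- restriction of a stable vector of an induced subgraph to a smaller induced subgraph -/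
lemma stable_sub {G : SimpleGraph (Fin n)} {I I' : Finset (Fin n)} (h : I' ⊆ I)
    {s : ↥(I : Set (Fin n)) → ℝ} (hs : IsStableVec (G.induce (I : Set (Fin n))) s) :
    IsStableVec (G.induce (I' : Set (Fin n)))
      (fun a : ↥(I' : Set (Fin n)) => s ⟨(a : Fin n), h a.2⟩) := by
  constructor
  · intro i; exact hs.1 _
  · intro i j hij
    exact hs.2 ⟨(i : Fin n), h i.2⟩ ⟨(j : Fin n), h j.2⟩ (by simpa using hij)

/-- the linear submatrix map -/
def restr {I I' : Finset (Fin n)} (h : I' ⊆ I) :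
    Matrix ↥(I : Set (Fin n)) ↥(I : Set (Fin n)) ℝ →ₗ[ℝ]
      Matrix ↥(I' : Set (Fin n)) ↥(I' : Set (Fin n)) ℝ where
  toFun M := M.submatrix (fun a => ⟨(a : Fin n), h a.2⟩) (fun a => ⟨(a : Fin n), h a.2⟩)
  map_add' _ _ := rfl
  map_smul' _ _ := rfl

lemma esc_mono {G : SimpleGraph (Fin n)} {X : Matrix (Fin n) (Fin n) ℝ}
    {I I' : Finset (Fin n)} (h : I' ⊆ I) (hX : escFeas G X I) : escFeas G X I' := by
  have key : stab2 (G.induce (I : Set (Fin n))) ⊆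
      (restr h) ⁻¹' (stab2 (G.induce (I' : Set (Fin n)))) := by
    apply convexHull_min
    · rintro M ⟨s, hs, rfl⟩
      exact subset_convexHull ℝ _ ⟨_, stable_sub h hs, rfl⟩
    · exact (convex_convexHull ℝ _).linear_preimage _
  exact key hX

lemma stable_esc {G : SimpleGraph (Fin n)} {s : Fin n → ℝ} (hs : IsStableVec G s)
    (I : Finset (Fin n)) : escFeas G (Matrix.vecMulVec s s) I := by
  refine subset_convexHull ℝ _ ⟨fun a : ↥(I : Set (Fin n)) => s (a : Fin n), ⟨?_, ?_⟩, rfl⟩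
  · intro i; exact hs.1 _
  · intro i j hij; exact hs.2 _ _ (by simpa using hij)

lemma stable_th2 {G : SimpleGraph (Fin n)} {s : Fin n → ℝ} (hs : IsStableVec G s) :
    (s, Matrix.vecMulVec s s) ∈ th2 G := by
  refine ⟨?_, ?_, ?_, ?_⟩
  · ext i j; simp [Matrix.transpose_apply, Matrix.vecMulVec_apply, mul_comm]
  · intro i; rcases hs.1 i with h | h <;> simp [Matrix.vecMulVec_apply, h]
  · intro i j hij; exact hs.2 i j hij
  · rw [sub_self]; exact Matrix.PosSemidef.zero

lemma esc_card0 {G : SimpleGraph (Fin n)} {X : Matrix (Fin n) (Fin n) ℝ}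
    {I : Finset (Fin n)} (h : I.card = 0) : escFeas G X I := by
  have hI : I = ∅ := Finset.card_eq_zero.mp h
  subst hI
  refine subset_convexHull ℝ _ ⟨fun _ => 0, ⟨fun _ => Or.inl rfl, fun _ _ _ => by ring⟩, ?_⟩
  ext a b
  exact absurd a.2 (by simp)

lemma esc_card1 {G : SimpleGraph (Fin n)} {x : Fin n → ℝ} {X : Matrix (Fin n) (Fin n) ℝ}
    (h : (x, X) ∈ th2 G) {I : Finset (Fin n)} (hI : I.card = 1) : escFeas G X I := by
  obtain ⟨i, rfl⟩ := Finset.card_eq_one.mp hI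
  obtain ⟨h0, h1⟩ := th2_bounds h i
  set T := ↥(({i} : Finset (Fin n)) : Set (Fin n))
  have hmem0 : (0 : Matrix T T ℝ) ∈
      { M | ∃ s, IsStableVec (G.induce (({i} : Finset (Fin n)) : Set (Fin n))) s ∧
          M = Matrix.vecMulVec s s } := by
    refine ⟨fun _ => 0, ⟨fun _ => Or.inl rfl, fun _ _ _ => by ring⟩, ?_⟩
    ext a b; simp [Matrix.vecMulVec_apply]
  have hmem1 : Matrix.vecMulVec (fun _ : T => (1 : ℝ)) (fun _ : T => (1 : ℝ)) ∈
      { M | ∃ s, IsStableVec (G.induce (({i} : Finset (Fin n)) : Set (Fin n))) s ∧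
          M = Matrix.vecMulVec s s } := by
    refine ⟨fun _ => 1, ⟨fun _ => Or.inr rfl, ?_⟩, rfl⟩
    intro a b hab
    have hai : (a : Fin n) = i := by simpa using a.2
    have hbi : (b : Fin n) = i := by simpa using b.2
    have h2 : G.Adj (a : Fin n) (b : Fin n) := by simpa using hab
    rw [hai, hbi] at h2
    exact absurd h2 (G.irrefl)
  have hc := convex_convexHull ℝ
      { M | ∃ s, IsStableVec (G.induce (({i} : Finset (Fin n)) : Set (Fin n))) s ∧
          M = Matrix.vecMulVec s s }
  have hcomb := hc (subset_convexHull ℝ _ hmem0) (subset_convexHull ℝ _ hmem1)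
      (a := 1 - x i) (b := x i) (by linarith) h0 (by ring)
  have heq : subMat X {i} = (1 - x i) • (0 : Matrix T T ℝ) +
      (x i) • Matrix.vecMulVec (fun _ : T => (1 : ℝ)) (fun _ : T => (1 : ℝ)) := by
    ext a b
    have hai : (a : Fin n) = i := by simpa using a.2
    have hbi : (b : Fin n) = i := by simpa using b.2
    simp only [subMat, Matrix.submatrix_apply, hai, hbi, Matrix.add_apply,
      Matrix.smul_apply, Matrix.zero_apply, Matrix.vecMulVec_apply, smul_eq_mul]
    have hd : X i i = x i := h.2.1 i
    rw [hd]; ring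
  rw [escFeas, heq]
  exact hcomb

end Stmt2Aux

namespace Stmt2Aux

lemma ub_univ {G : SimpleGraph (Fin n)} {x : Fin n → ℝ} {X : Matrix (Fin n) (Fin n) ℝ}
    (h : (x, X) ∈ th2 G) {a : ℝ}
    (ha : ∀ r ∈ { r | ∃ s, IsStableVec G s ∧ r = ∑ i, s i }, r ≤ a)
    (hesc : escFeas G X (Finset.univ)) : ∑ i, x i ≤ a := by
  set T := ↥((Finset.univ : Finset (Fin n)) : Set (Fin n)) with hT
  have hbij : Function.Bijective (fun j : T => (j : Fin n)) :=
    ⟨Subtype.val_injective, fun i => ⟨⟨i, by simp⟩, rfl⟩⟩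
  set C : Set (Matrix T T ℝ) := { M | ∑ j, M j j ≤ a } with hC
  have hconv : Convex ℝ C := by
    intro M hM N hN p q hp hq hpq
    simp only [hC, Set.mem_setOf_eq, Matrix.add_apply, Matrix.smul_apply, smul_eq_mul,
      Finset.sum_add_distrib, ← Finset.mul_sum] at hM hN ⊢
    have h1 := mul_le_mul_of_nonneg_left hM hp
    have h2 := mul_le_mul_of_nonneg_left hN hq
    have h3 : p * a + q * a = a := by rw [← add_mul, hpq, one_mul]
    linarith
  have hgen : { M | ∃ s, IsStableVec
        (G.induce ((Finset.univ : Finset (Fin n)) : Set (Fin n))) s ∧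
        M = Matrix.vecMulVec s s } ⊆ C := by
    rintro M ⟨s, hs, rfl⟩
    show ∑ j : T, Matrix.vecMulVec s s j j ≤ a
    have h01 : ∀ j : T, Matrix.vecMulVec s s j j = s j := by
      intro j; rcases hs.1 j with hj | hj <;> simp [Matrix.vecMulVec_apply, hj]
    rw [Finset.sum_congr rfl fun j _ => h01 j]
    set s' : Fin n → ℝ := fun i => s ⟨i, by simp⟩ with hs'
    have hstable : IsStableVec G s' := by
      refine ⟨fun i => hs.1 _, fun i j hij => ?_⟩
      exact hs.2 ⟨i, by simp⟩ ⟨j, by simp⟩ (by simpa using hij)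
    have hsum : ∑ j : T, s j = ∑ i, s' i :=
      Fintype.sum_bijective _ hbij s s' fun j => rfl
    rw [hsum]
    exact ha _ ⟨s', hstable, rfl⟩
  have hmemC : subMat X Finset.univ ∈ C := convexHull_min hgen hconv hesc
  have hsum2 : ∑ j : T, subMat X Finset.univ j j = ∑ i, x i := by
    refine Fintype.sum_bijective _ hbij _ _ fun j => ?_
    show X (j : Fin n) (j : Fin n) = x (j : Fin n)
    exact h.2.1 _
  rw [← hsum2]
  exact hmemC

end Stmt2Aux


/-- properties of the exact subgraph hierarchy:
`ϑ(G) = z^E_0(G) = z^E_1(G)`, the levels are monotone nonincreasing, and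
`z^E_n(G) = α(G)`. -/
theorem stmt2 {n : ℕ} (hn : 1 ≤ n) (G : SimpleGraph (Fin n)) (a : ℝ)
    (ha : IsGreatest { r | ∃ s, IsStableVec G s ∧ r = ∑ i, s i } a) :
    sSup { r | ∃ x X, (x, X) ∈ th2 G ∧ r = ∑ i, x i } = zE G (Jk n 0) ∧
    zE G (Jk n 0) = zE G (Jk n 1) ∧
    (∀ k, 1 ≤ k → k ≤ n → zE G (Jk n k) ≤ zE G (Jk n (k - 1))) ∧
    zE G (Jk n n) = a := by
  obtain ⟨s, hs, hsa⟩ := ha.1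
  have hmem : ∀ J : Set (Finset (Fin n)),
      a ∈ { r | ∃ x X, (x, X) ∈ th2 G ∧ (∀ I ∈ J, escFeas G X I) ∧ r = ∑ i, x i } :=
    fun J => ⟨s, Matrix.vecMulVec s s, Stmt2Aux.stable_th2 hs,
      fun I _ => Stmt2Aux.stable_esc hs I, hsa⟩
  refine ⟨?_, ?_, ?_, ?_⟩
  · unfold zE
    congr 1
    ext r
    constructor
    · rintro ⟨x, X, h, rfl⟩
      exact ⟨x, X, h, fun I hI => Stmt2Aux.esc_card0 hI, rfl⟩
    · rintro ⟨x, X, h, -, rfl⟩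
      exact ⟨x, X, h, rfl⟩
  · unfold zE
    congr 1
    ext r
    constructor
    · rintro ⟨x, X, h, -, rfl⟩
      exact ⟨x, X, h, fun I hI => Stmt2Aux.esc_card1 h hI, rfl⟩
    · rintro ⟨x, X, h, -, rfl⟩
      exact ⟨x, X, h, fun I hI => Stmt2Aux.esc_card0 hI, rfl⟩
  · intro k hk1 hkn
    apply csSup_le_csSup (Stmt2Aux.bddAbove_set G _) ⟨a, hmem _⟩
    rintro r ⟨x, X, h, hesc, rfl⟩
    refine ⟨x, X, h, fun I hI => ?_, rfl⟩
    have hIc : I.card = k - 1 := hI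
    obtain ⟨T, hsub, hcard⟩ := Finset.exists_superset_card_eq (n := k) (s := I)
      (by omega) (by rw [Fintype.card_fin]; exact hkn)
    exact Stmt2Aux.esc_mono hsub (hesc T hcard)
  · apply IsGreatest.csSup_eq
    refine ⟨hmem _, ?_⟩
    rintro r ⟨x, X, h, hesc, rfl⟩
    exact Stmt2Aux.ub_univ h ha.2 (hesc Finset.univ (by simp [Jk]))
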